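/- Let H = (V, E, ω) be a hypergraph in which every net has at least two pins, and let s, t ∈ V be distinct. Then the minimum capacity over all (s,t)-cuts of the Liu–Wong network N_W of H equals the minimum capacity over all (s,t)-cuts of the Lawler network N_L of H; both equal the minimum, over all sets S ⊆ V with s ∈ S and t ∉ S, of the cut weight of the bipartition (S, V∖S) of H. -/

import Mathlib

open scoped ENNReal

/-- Capacities of the Lawler network of a hypergraph: nodes are the hypernodes
(`Sum.inl`) together with two bridging nodes per net (`Sum.inr (e, false)` is `e′`,
`Sum.inr (e, true)` is `e″`). -/
noncomputable def lawlerCap {V E : Type} [DecidableEq V] [DecidableEq E]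
    (pins : E → Finset V) (ω : E → ℝ) :
    V ⊕ E × Bool → V ⊕ E × Bool → ℝ≥0∞
  | Sum.inl p, Sum.inr (e, false) => if p ∈ pins e then ⊤ else 0
  | Sum.inr (e, false), Sum.inr (e', true) => if e = e' then ENNReal.ofReal (ω e) else 0
  | Sum.inr (e, true), Sum.inl p => if p ∈ pins e then ⊤ else 0
  | _, _ => 0

/-- `f` is an `(s,t)`-flow for the capacity function `c`. -/
def IsFlow {ν : Type} [Fintype ν] (c : ν → ν → ℝ≥0∞) (s t : ν) (f : ν → ν → ℝ) : Prop :=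
  (∀ u v, (f u v : EReal) ≤ (c u v : EReal)) ∧
  (∀ u v, f u v = - f v u) ∧
  (∀ u, u ≠ s → u ≠ t → ∑ v, f u v = 0)

/-- The value of a flow. -/
noncomputable def flowValue {ν : Type} [Fintype ν] (f : ν → ν → ℝ) (s : ν) : ℝ :=
  ∑ v, f s v

/-- `f` is a maximum `(s,t)`-flow. -/
def IsMaxFlow {ν : Type} [Fintype ν] (c : ν → ν → ℝ≥0∞) (s t : ν) (f : ν → ν → ℝ) : Prop :=
  IsFlow c s t f ∧ ∀ g, IsFlow c s t g → flowValue g s ≤ flowValue f s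

/-- `(u,v)` is an edge of the residual network, i.e. `r_f(u,v) = c(u,v) - f(u,v) > 0`. -/
def ResidualEdge {ν : Type} (c : ν → ν → ℝ≥0∞) (f : ν → ν → ℝ) (u v : ν) : Prop :=
  (f u v : EReal) < (c u v : EReal)

open scoped Classical in
/-- The capacity of the `(s,t)`-cut `(S, 𝒱 ∖ S)`. -/
noncomputable def cutCap {ν : Type} [Fintype ν] (c : ν → ν → ℝ≥0∞) (S : Set ν) : ℝ≥0∞ :=
  ∑ u, ∑ v, if u ∈ S ∧ v ∉ S then c u v else 0

open scoped Classical in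
/-- The cut weight of the bipartition `(S, V ∖ S)` of a hypergraph: the total
weight of all nets split by `S`. -/
noncomputable def hypCutWeight {V E : Type} [Fintype E]
    (pins : E → Finset V) (ω : E → ℝ) (S : Set V) : ℝ :=
  ∑ e, if (∃ p ∈ pins e, p ∈ S) ∧ (∃ p ∈ pins e, p ∉ S) then ω e else 0

/-- Capacities of the Liu–Wong network of a hypergraph: bridging nodes only for nets
with at least three pins; every two-pin net `{u, w}` instead contributes two
antiparallel direct edges `(u, w)` and `(w, u)` of capacity `ω e` (capacities of
parallel edges arising from several two-pin nets are added). -/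
noncomputable def liuWongCap {V E : Type} [Fintype E] [DecidableEq V] [DecidableEq E]
    (pins : E → Finset V) (ω : E → ℝ) :
    V ⊕ {e : E // 3 ≤ (pins e).card} × Bool →
      V ⊕ {e : E // 3 ≤ (pins e).card} × Bool → ℝ≥0∞
  | Sum.inl u, Sum.inl w =>
      ∑ e ∈ Finset.univ.filter (fun e : E => (pins e).card = 2 ∧ pins e = {u, w}),
        ENNReal.ofReal (ω e)
  | Sum.inl p, Sum.inr (e, false) => if p ∈ pins e.1 then ⊤ else 0
  | Sum.inr (e, false), Sum.inr (e', true) => if e = e' then ENNReal.ofReal (ω e.1) else 0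
  | Sum.inr (e, true), Sum.inl p => if p ∈ pins e.1 then ⊤ else 0
  | _, _ => 0


open scoped Classical

section Aux

variable {V E : Type} [Fintype V] [Fintype E] [DecidableEq V] [DecidableEq E]
  (pins : E → Finset V) (ω : E → ℝ)

lemma single_le_cutCap {ν : Type} [Fintype ν] (c : ν → ν → ℝ≥0∞) (𝒮 : Set ν) (u v : ν) :
    (if u ∈ 𝒮 ∧ v ∉ 𝒮 then c u v else 0) ≤ cutCap c 𝒮 := by
  calc (if u ∈ 𝒮 ∧ v ∉ 𝒮 then c u v else 0)
      ≤ ∑ w, if u ∈ 𝒮 ∧ w ∉ 𝒮 then c u w else 0 :=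
        Finset.single_le_sum (f := fun w => if u ∈ 𝒮 ∧ w ∉ 𝒮 then c u w else 0)
          (fun _ _ => zero_le) (Finset.mem_univ v)
    _ ≤ cutCap c 𝒮 :=
        Finset.single_le_sum (f := fun x => ∑ w, if x ∈ 𝒮 ∧ w ∉ 𝒮 then c x w else 0)
          (fun _ _ => zero_le) (Finset.mem_univ u)

lemma cutCap_eq_top {ν : Type} [Fintype ν] {c : ν → ν → ℝ≥0∞} {𝒮 : Set ν} {u v : ν}
    (hu : u ∈ 𝒮) (hv : v ∉ 𝒮) (hc : c u v = ⊤) : cutCap c 𝒮 = ⊤ := by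
  have := single_le_cutCap c 𝒮 u v
  rw [if_pos ⟨hu, hv⟩, hc, top_le_iff] at this
  exact this

lemma ofReal_hypCutWeight (hω : ∀ e, 0 ≤ ω e) (S : Set V) :
    ENNReal.ofReal (hypCutWeight pins ω S) =
      ∑ e, if (∃ p ∈ pins e, p ∈ S) ∧ (∃ p ∈ pins e, p ∉ S) then ENNReal.ofReal (ω e) else 0 := by
  rw [hypCutWeight, ENNReal.ofReal_sum_of_nonneg]
  · exact Finset.sum_congr rfl fun e _ => by split_ifs <;> simp
  · intro e _
    split_ifs
    · exact hω e
    · exact le_rfl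

set_option linter.unusedSectionVars false

lemma lawler_lower (hω : ∀ e, 0 ≤ ω e) (𝒮 : Set (V ⊕ E × Bool)) :
    ENNReal.ofReal (hypCutWeight pins ω {v | Sum.inl v ∈ 𝒮}) ≤ cutCap (lawlerCap pins ω) 𝒮 := by
  by_cases htop : cutCap (lawlerCap pins ω) 𝒮 = ⊤
  · simp [htop]
  set S : Set V := {v | Sum.inl v ∈ 𝒮} with hS
  set c := lawlerCap pins ω with hc
  rw [ofReal_hypCutWeight pins ω hω]
  set g : (V ⊕ E × Bool) → (V ⊕ E × Bool) → ℝ≥0∞ :=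
    fun u v => if u ∈ 𝒮 ∧ v ∉ 𝒮 then c u v else 0 with hg
  have key : ∀ e : E, (if (∃ p ∈ pins e, p ∈ S) ∧ (∃ p ∈ pins e, p ∉ S)
      then ENNReal.ofReal (ω e) else 0) ≤ g (Sum.inr (e, false)) (Sum.inr (e, true)) := by
    intro e
    split_ifs with h
    · obtain ⟨⟨p, hp, hpS⟩, ⟨q, hq, hqS⟩⟩ := h
      have h1 : (Sum.inr (e, false) : V ⊕ E × Bool) ∈ 𝒮 := by
        by_contra h1
        exact htop (cutCap_eq_top hpS h1 (by simp [hc, lawlerCap, hp]))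
      have h2 : (Sum.inr (e, true) : V ⊕ E × Bool) ∉ 𝒮 := by
        intro h2
        exact htop (cutCap_eq_top h2 hqS (by simp [hc, lawlerCap, hq]))
      simp [hg, h1, h2, hc, lawlerCap]
    · exact zero_le
  calc ∑ e : E, (if (∃ p ∈ pins e, p ∈ S) ∧ (∃ p ∈ pins e, p ∉ S)
          then ENNReal.ofReal (ω e) else 0)
      ≤ ∑ e : E, g (Sum.inr (e, false)) (Sum.inr (e, true)) :=
        Finset.sum_le_sum fun e _ => key e
    _ ≤ ∑ e : E, ∑ v, g (Sum.inr (e, false)) v :=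
        Finset.sum_le_sum fun e _ =>
          Finset.single_le_sum (f := fun v => g (Sum.inr (e, false)) v)
            (fun _ _ => zero_le) (Finset.mem_univ _)
    _ = ∑ u ∈ Finset.univ.image (fun e : E => (Sum.inr (e, false) : V ⊕ E × Bool)),
          ∑ v, g u v :=
        (Finset.sum_image (f := fun u => ∑ v, g u v)
          (g := fun e : E => (Sum.inr (e, false) : V ⊕ E × Bool))
          (by intro a _ b _ h; simpa using h)).symm
    _ ≤ ∑ u, ∑ v, g u v := Finset.sum_le_sum_of_subset (Finset.subset_univ _)
    _ = cutCap c 𝒮 := rfl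

/-- Canonical cut in the Lawler network induced by a vertex set. -/
def lawlerCut (pins : E → Finset V) (S : Set V) : Set (V ⊕ E × Bool) :=
  fun x => match x with
  | Sum.inl v => v ∈ S
  | Sum.inr (e, false) => ∃ p ∈ pins e, p ∈ S
  | Sum.inr (e, true) => ∀ p ∈ pins e, p ∈ S

lemma lawler_upper (hω : ∀ e, 0 ≤ ω e) (S : Set V) :
    cutCap (lawlerCap pins ω) (lawlerCut pins S) ≤ ENNReal.ofReal (hypCutWeight pins ω S) := by
  rw [ofReal_hypCutWeight pins ω hω]
  set 𝒮 := lawlerCut pins S with h𝒮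
  set c := lawlerCap pins ω with hc
  set G : (V ⊕ E × Bool) × (V ⊕ E × Bool) → ℝ≥0∞ :=
    fun p => if p.1 ∈ 𝒮 ∧ p.2 ∉ 𝒮 then c p.1 p.2 else 0 with hG
  set ψ : E → (V ⊕ E × Bool) × (V ⊕ E × Bool) :=
    fun e => (Sum.inr (e, false), Sum.inr (e, true)) with hψ
  have hmemF : ∀ e : E, ((Sum.inr (e, false) : V ⊕ E × Bool) ∈ 𝒮) ↔ ∃ p ∈ pins e, p ∈ S :=
    fun e => Iff.rfl
  have hmemT : ∀ e : E, ((Sum.inr (e, true) : V ⊕ E × Bool) ∈ 𝒮) ↔ ∀ p ∈ pins e, p ∈ S :=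
    fun e => Iff.rfl
  have hmemV : ∀ v : V, ((Sum.inl v : V ⊕ E × Bool) ∈ 𝒮) ↔ v ∈ S := fun v => Iff.rfl
  have h1 : cutCap c 𝒮 = ∑ p : (V ⊕ E × Bool) × (V ⊕ E × Bool), G p := by
    rw [Fintype.sum_prod_type]; rfl
  have hzero : ∀ p ∈ (Finset.univ : Finset ((V ⊕ E × Bool) × (V ⊕ E × Bool))),
      p ∉ Finset.univ.image ψ → G p = 0 := by
    rintro ⟨u, v⟩ - hp
    rcases u with p | ⟨e, _ | _⟩ <;> rcases v with q | ⟨e', _ | _⟩ <;>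
      simp only [hG, hc, lawlerCap]
    · simp
    · -- (inl p, inr (e', false))
      split_ifs with h h2
      · exact absurd ⟨p, h2, (hmemV p).1 h.1⟩ (h.2 ∘ (hmemF e').2)
      · rfl
      · rfl
    · simp
    · simp
    · simp
    · -- (inr (e, false), inr (e', true))
      by_cases he : e = e'
      · exact absurd (Finset.mem_image_of_mem ψ (Finset.mem_univ e)) (by subst he; exact hp)
      · simp [he]
    · -- (inr (e, true), inl q)
      split_ifs with h h2
      · exact absurd ((hmemT e).1 h.1 q h2) h.2
      · rfl
      · rfl
    · simp
    · simp
  have hinj : ∀ x ∈ (Finset.univ : Finset E), ∀ y ∈ Finset.univ, ψ x = ψ y → x = y := by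
    intro a _ b _ h
    simpa [hψ, Prod.ext_iff] using h
  have h4 : ∀ e : E, G (ψ e) =
      if (∃ p ∈ pins e, p ∈ S) ∧ (∃ p ∈ pins e, p ∉ S) then ENNReal.ofReal (ω e) else 0 := by
    intro e
    have hiff : ((Sum.inr (e, false) : V ⊕ E × Bool) ∈ 𝒮 ∧
        (Sum.inr (e, true) : V ⊕ E × Bool) ∉ 𝒮) ↔
        ((∃ p ∈ pins e, p ∈ S) ∧ (∃ p ∈ pins e, p ∉ S)) := by
      rw [hmemF, hmemT]
      constructor
      · rintro ⟨h1', h2'⟩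
        push_neg at h2'
        exact ⟨h1', h2'⟩
      · rintro ⟨h1', p, hp, hpS⟩
        exact ⟨h1', fun hall => hpS (hall p hp)⟩
    simp only [hG, hψ, hc, lawlerCap]
    rw [if_congr hiff rfl rfl]
    split_ifs with h
    · simp
    · rfl
  calc cutCap c 𝒮 = ∑ p : (V ⊕ E × Bool) × (V ⊕ E × Bool), G p := h1
    _ = ∑ p ∈ Finset.univ.image ψ, G p := (Finset.sum_subset (Finset.subset_univ _) hzero).symm
    _ = ∑ e : E, G (ψ e) := Finset.sum_image hinj
    _ = ∑ e : E, if (∃ p ∈ pins e, p ∈ S) ∧ (∃ p ∈ pins e, p ∉ S)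
          then ENNReal.ofReal (ω e) else 0 := Finset.sum_congr rfl fun e _ => h4 e
    _ ≤ ∑ e : E, if (∃ p ∈ pins e, p ∈ S) ∧ (∃ p ∈ pins e, p ∉ S)
          then ENNReal.ofReal (ω e) else 0 := le_rfl

lemma lw_lower (hω : ∀ e, 0 ≤ ω e) (hpins : ∀ e, 2 ≤ (pins e).card)
    (𝒮 : Set (V ⊕ {e : E // 3 ≤ (pins e).card} × Bool)) :
    ENNReal.ofReal (hypCutWeight pins ω {v | Sum.inl v ∈ 𝒮}) ≤ cutCap (liuWongCap pins ω) 𝒮 := by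
  by_cases htop : cutCap (liuWongCap pins ω) 𝒮 = ⊤
  · simp [htop]
  set S : Set V := {v | Sum.inl v ∈ 𝒮} with hS
  set c := liuWongCap pins ω with hc
  set g : (V ⊕ {e : E // 3 ≤ (pins e).card} × Bool) →
      (V ⊕ {e : E // 3 ≤ (pins e).card} × Bool) → ℝ≥0∞ :=
    fun u v => if u ∈ 𝒮 ∧ v ∉ 𝒮 then c u v else 0 with hg
  set F : (V ⊕ {e : E // 3 ≤ (pins e).card} × Bool) → ℝ≥0∞ := fun u => ∑ v, g u v with hF
  set H : E → ℝ≥0∞ := fun e =>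
    if (∃ p ∈ pins e, p ∈ S) ∧ (∃ p ∈ pins e, p ∉ S) then ENNReal.ofReal (ω e) else 0 with hH
  rw [ofReal_hypCutWeight pins ω hω]
  have hcut : cutCap c 𝒮 = (∑ a : V, F (Sum.inl a)) + ∑ b, F (Sum.inr b) := by
    rw [cutCap]
    exact Fintype.sum_sum_type _
  have hfe : Finset.univ.filter (fun e : E => ¬(pins e).card = 2) =
      Finset.univ.filter (fun e : E => 3 ≤ (pins e).card) := by
    ext e
    have := hpins e
    simp only [Finset.mem_filter, Finset.mem_univ, true_and]
    omega
  -- big nets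
  have claim2 : ∑ e ∈ Finset.univ.filter (fun e : E => ¬(pins e).card = 2), H e
      ≤ ∑ b : {e : E // 3 ≤ (pins e).card} × Bool, F (Sum.inr b) := by
    rw [hfe, Finset.sum_subtype (p := fun e : E => 3 ≤ (pins e).card) _
      (fun e => by simp) H]
    have step1 : ∀ e' : {e : E // 3 ≤ (pins e).card},
        H e'.1 ≤ F (Sum.inr (e', false)) := by
      intro e'
      have step0 : H e'.1 ≤ g (Sum.inr (e', false)) (Sum.inr (e', true)) := by
        simp only [hH]
        split_ifs with h
        · obtain ⟨⟨p, hp, hpS⟩, ⟨q, hq, hqS⟩⟩ := h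
          have h1 : (Sum.inr (e', false) : V ⊕ {e : E // 3 ≤ (pins e).card} × Bool) ∈ 𝒮 := by
            by_contra h1
            exact htop (cutCap_eq_top hpS h1 (by simp [hc, liuWongCap, hp]))
          have h2 : (Sum.inr (e', true) : V ⊕ {e : E // 3 ≤ (pins e).card} × Bool) ∉ 𝒮 := by
            intro h2
            exact htop (cutCap_eq_top h2 hqS (by simp [hc, liuWongCap, hq]))
          simp [hg, h1, h2, hc, liuWongCap]
        · exact zero_le
      exact step0.trans (Finset.single_le_sum (f := fun v => g (Sum.inr (e', false)) v)
        (fun _ _ => zero_le) (Finset.mem_univ _))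
    calc ∑ e' : {e : E // 3 ≤ (pins e).card}, H e'.1
        ≤ ∑ e' : {e : E // 3 ≤ (pins e).card}, F (Sum.inr (e', false)) :=
          Finset.sum_le_sum fun e' _ => step1 e'
      _ ≤ ∑ e' : {e : E // 3 ≤ (pins e).card},
            (F (Sum.inr (e', true)) + F (Sum.inr (e', false))) :=
          Finset.sum_le_sum fun e' _ => le_add_self
      _ = ∑ b : {e : E // 3 ≤ (pins e).card} × Bool, F (Sum.inr b) := by
          rw [Fintype.sum_prod_type]
          exact Finset.sum_congr rfl fun e' _ =>
            (Fintype.sum_bool (f := fun y => F (Sum.inr (e', y)))).symm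
  -- two-pin nets
  have claim1 : ∑ e ∈ Finset.univ.filter (fun e : E => (pins e).card = 2), H e
      ≤ ∑ a : V, F (Sum.inl a) := by
    set tt : E → V → V → ℝ≥0∞ := fun e a w =>
      if ((Sum.inl a : V ⊕ {e : E // 3 ≤ (pins e).card} × Bool) ∈ 𝒮 ∧
            (Sum.inl w : V ⊕ {e : E // 3 ≤ (pins e).card} × Bool) ∉ 𝒮) ∧
          ((pins e).card = 2 ∧ pins e = {a, w}) then ENNReal.ofReal (ω e) else 0 with htt
    set T : E → ℝ≥0∞ := fun e => ∑ a : V, ∑ w : V, tt e a w with hT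
    have point : ∀ a w : V, g (Sum.inl a) (Sum.inl w) = ∑ e : E, tt e a w := by
      intro a w
      rw [hg]
      have hcval : c (Sum.inl a) (Sum.inl w) =
          ∑ e ∈ Finset.univ.filter (fun e : E => (pins e).card = 2 ∧ pins e = {a, w}),
            ENNReal.ofReal (ω e) := rfl
      show (if (Sum.inl a : V ⊕ {e : E // 3 ≤ (pins e).card} × Bool) ∈ 𝒮 ∧
          (Sum.inl w : V ⊕ {e : E // 3 ≤ (pins e).card} × Bool) ∉ 𝒮
          then c (Sum.inl a) (Sum.inl w) else 0) = _
      rw [hcval, Finset.sum_filter]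
      split_ifs with h
      · exact Finset.sum_congr rfl fun e _ => by simp [htt, h]
      · exact (Finset.sum_eq_zero fun e _ => by simp [htt, h]).symm
    have expand : ∑ a : V, ∑ w : V, g (Sum.inl a) (Sum.inl w) = ∑ e : E, T e := by
      calc ∑ a : V, ∑ w : V, g (Sum.inl a) (Sum.inl w)
          = ∑ a : V, ∑ w : V, ∑ e : E, tt e a w :=
            Finset.sum_congr rfl fun a _ => Finset.sum_congr rfl fun w _ => point a w
        _ = ∑ a : V, ∑ e : E, ∑ w : V, tt e a w :=
            Finset.sum_congr rfl fun a _ => Finset.sum_comm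
        _ = ∑ e : E, ∑ a : V, ∑ w : V, tt e a w := Finset.sum_comm
    have perE : ∀ e ∈ Finset.univ.filter (fun e : E => (pins e).card = 2), H e ≤ T e := by
      intro e he
      rw [Finset.mem_filter] at he
      simp only [hH]
      split_ifs with h
      · obtain ⟨⟨p, hp, hpS⟩, ⟨q, hq, hqS⟩⟩ := h
        have hpq : p ≠ q := fun he' => hqS (he' ▸ hpS)
        have hpins_eq : pins e = {p, q} := by
          refine (Finset.eq_of_subset_of_card_le ?_ ?_).symm
          · intro x hx
            rcases Finset.mem_insert.1 hx with h' | h'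
            · exact h' ▸ hp
            · exact (Finset.mem_singleton.1 h') ▸ hq
          · rw [Finset.card_pair hpq, he.2]
        have hval : ENNReal.ofReal (ω e) = tt e p q := by
          simp only [htt]
          rw [if_pos ⟨⟨hpS, hqS⟩, he.2, hpins_eq⟩]
        have hterm : ENNReal.ofReal (ω e) ≤ ∑ w : V, tt e p w := by
          rw [hval]
          exact Finset.single_le_sum (f := fun w => tt e p w)
            (fun _ _ => zero_le) (Finset.mem_univ q)
        exact hterm.trans (Finset.single_le_sum (f := fun a => ∑ w : V, tt e a w)
          (fun _ _ => zero_le) (Finset.mem_univ p))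
      · exact zero_le
    calc ∑ e ∈ Finset.univ.filter (fun e : E => (pins e).card = 2), H e
        ≤ ∑ e ∈ Finset.univ.filter (fun e : E => (pins e).card = 2), T e :=
          Finset.sum_le_sum perE
      _ ≤ ∑ e : E, T e := Finset.sum_le_sum_of_subset (Finset.subset_univ _)
      _ = ∑ a : V, ∑ w : V, g (Sum.inl a) (Sum.inl w) := expand.symm
      _ ≤ ∑ a : V, F (Sum.inl a) := by
          apply Finset.sum_le_sum
          intro a _
          rw [hF]
          show _ ≤ ∑ v, g (Sum.inl a) v
          rw [Fintype.sum_sum_type (f := fun v => g (Sum.inl a) v)]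
          exact le_add_right le_rfl
  calc ∑ e : E, H e
      = ∑ e ∈ Finset.univ.filter (fun e : E => (pins e).card = 2), H e +
        ∑ e ∈ Finset.univ.filter (fun e : E => ¬(pins e).card = 2), H e :=
        (Finset.sum_filter_add_sum_filter_not _ _ _).symm
    _ ≤ (∑ a : V, F (Sum.inl a)) + ∑ b, F (Sum.inr b) := add_le_add claim1 claim2
    _ = cutCap c 𝒮 := hcut.symm

/-- Canonical cut in the Liu–Wong network induced by a vertex set. -/
def lwCut (pins : E → Finset V) (S : Set V) : Set (V ⊕ {e : E // 3 ≤ (pins e).card} × Bool) :=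
  fun x => match x with
  | Sum.inl v => v ∈ S
  | Sum.inr (e, false) => ∃ p ∈ pins e.1, p ∈ S
  | Sum.inr (e, true) => ∀ p ∈ pins e.1, p ∈ S

lemma lw_upper (hω : ∀ e, 0 ≤ ω e) (hpins : ∀ e, 2 ≤ (pins e).card) (S : Set V) :
    cutCap (liuWongCap pins ω) (lwCut pins S) ≤ ENNReal.ofReal (hypCutWeight pins ω S) := by
  rw [ofReal_hypCutWeight pins ω hω]
  set 𝒮 := lwCut pins S with h𝒮
  set c := liuWongCap pins ω with hc
  set g : (V ⊕ {e : E // 3 ≤ (pins e).card} × Bool) →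
      (V ⊕ {e : E // 3 ≤ (pins e).card} × Bool) → ℝ≥0∞ :=
    fun u v => if u ∈ 𝒮 ∧ v ∉ 𝒮 then c u v else 0 with hg
  set F : (V ⊕ {e : E // 3 ≤ (pins e).card} × Bool) → ℝ≥0∞ := fun u => ∑ v, g u v with hF
  set H : E → ℝ≥0∞ := fun e =>
    if (∃ p ∈ pins e, p ∈ S) ∧ (∃ p ∈ pins e, p ∉ S) then ENNReal.ofReal (ω e) else 0 with hH
  have hmemF : ∀ e : {e : E // 3 ≤ (pins e).card},
      ((Sum.inr (e, false) : V ⊕ {e : E // 3 ≤ (pins e).card} × Bool) ∈ 𝒮) ↔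
        ∃ p ∈ pins e.1, p ∈ S := fun e => Iff.rfl
  have hmemT : ∀ e : {e : E // 3 ≤ (pins e).card},
      ((Sum.inr (e, true) : V ⊕ {e : E // 3 ≤ (pins e).card} × Bool) ∈ 𝒮) ↔
        ∀ p ∈ pins e.1, p ∈ S := fun e => Iff.rfl
  have hmemV : ∀ v : V,
      ((Sum.inl v : V ⊕ {e : E // 3 ≤ (pins e).card} × Bool) ∈ 𝒮) ↔ v ∈ S := fun v => Iff.rfl
  have hcut : cutCap c 𝒮 = (∑ a : V, F (Sum.inl a)) + ∑ b, F (Sum.inr b) := by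
    rw [cutCap]
    exact Fintype.sum_sum_type _
  have hfe : Finset.univ.filter (fun e : E => ¬(pins e).card = 2) =
      Finset.univ.filter (fun e : E => 3 ≤ (pins e).card) := by
    ext e
    have := hpins e
    simp only [Finset.mem_filter, Finset.mem_univ, true_and]
    omega
  -- the cross terms vanish
  have hBzero : ∀ a : V, F (Sum.inl a) = ∑ w : V, g (Sum.inl a) (Sum.inl w) := by
    intro a
    rw [hF]
    show (∑ v, g (Sum.inl a) v) = _
    rw [Fintype.sum_sum_type (f := fun v => g (Sum.inl a) v)]
    have : ∑ b : {e : E // 3 ≤ (pins e).card} × Bool, g (Sum.inl a) (Sum.inr b) = 0 := by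
      apply Finset.sum_eq_zero
      rintro ⟨e', _ | _⟩ -
      · simp only [hg]
        split_ifs with h
        · rcases h with ⟨h1, h2⟩
          by_cases hp : a ∈ pins e'.1
          · exact absurd ((hmemF e').2 ⟨a, hp, (hmemV a).1 h1⟩) h2
          · simp [hc, liuWongCap, hp]
        · rfl
      · simp [hg, hc, liuWongCap]
    rw [this, add_zero]
  have hCzero : ∀ b : {e : E // 3 ≤ (pins e).card} × Bool,
      F (Sum.inr b) = ∑ b' : {e : E // 3 ≤ (pins e).card} × Bool,
        g (Sum.inr b) (Sum.inr b') := by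
    intro b
    rw [hF]
    show (∑ v, g (Sum.inr b) v) = _
    rw [Fintype.sum_sum_type (f := fun v => g (Sum.inr b) v)]
    have : ∑ w : V, g (Sum.inr b) (Sum.inl w) = 0 := by
      apply Finset.sum_eq_zero
      rintro w -
      obtain ⟨e', _ | _⟩ := b
      · simp [hg, hc, liuWongCap]
      · simp only [hg]
        split_ifs with h
        · rcases h with ⟨h1, h2⟩
          by_cases hp : w ∈ pins e'.1
          · exact absurd ((hmemV w).2 ((hmemT e').1 h1 w hp)) h2
          · simp [hc, liuWongCap, hp]
        · rfl
    rw [this, zero_add]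
  -- two-pin part
  have chunkA : ∑ a : V, ∑ w : V, g (Sum.inl a) (Sum.inl w) ≤
      ∑ e ∈ Finset.univ.filter (fun e : E => (pins e).card = 2), H e := by
    set tt : E → V → V → ℝ≥0∞ := fun e a w =>
      if ((Sum.inl a : V ⊕ {e : E // 3 ≤ (pins e).card} × Bool) ∈ 𝒮 ∧
            (Sum.inl w : V ⊕ {e : E // 3 ≤ (pins e).card} × Bool) ∉ 𝒮) ∧
          ((pins e).card = 2 ∧ pins e = {a, w}) then ENNReal.ofReal (ω e) else 0 with htt
    have point : ∀ a w : V, g (Sum.inl a) (Sum.inl w) = ∑ e : E, tt e a w := by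
      intro a w
      rw [hg]
      have hcval : c (Sum.inl a) (Sum.inl w) =
          ∑ e ∈ Finset.univ.filter (fun e : E => (pins e).card = 2 ∧ pins e = {a, w}),
            ENNReal.ofReal (ω e) := rfl
      show (if (Sum.inl a : V ⊕ {e : E // 3 ≤ (pins e).card} × Bool) ∈ 𝒮 ∧
          (Sum.inl w : V ⊕ {e : E // 3 ≤ (pins e).card} × Bool) ∉ 𝒮
          then c (Sum.inl a) (Sum.inl w) else 0) = _
      rw [hcval, Finset.sum_filter]
      split_ifs with h
      · exact Finset.sum_congr rfl fun e _ => by simp [htt, h]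
      · exact (Finset.sum_eq_zero fun e _ => by simp [htt, h]).symm
    have perE : ∀ e : E, (∑ a : V, ∑ w : V, tt e a w) ≤
        (if (pins e).card = 2 then H e else 0) := by
      intro e
      by_cases h2 : (pins e).card = 2
      · rw [if_pos h2]
        simp only [hH]
        split_ifs with hsp
        · obtain ⟨⟨p, hp, hpS⟩, ⟨q, hq, hqS⟩⟩ := hsp
          have hpq : p ≠ q := fun he' => hqS (he' ▸ hpS)
          have hpins_eq : pins e = {p, q} := by
            refine (Finset.eq_of_subset_of_card_le ?_ ?_).symm
            · intro x hx
              rcases Finset.mem_insert.1 hx with h' | h'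
              · exact h' ▸ hp
              · exact (Finset.mem_singleton.1 h') ▸ hq
            · rw [Finset.card_pair hpq, h2]
          have pw : ∀ a w : V, tt e a w ≤
              if a = p ∧ w = q then ENNReal.ofReal (ω e) else 0 := by
            intro a w
            simp only [htt]
            split_ifs with hcond hyes
            · exact le_rfl
            · exfalso
              obtain ⟨⟨haS, hwS⟩, -, hpe⟩ := hcond
              have haS' : a ∈ S := (hmemV a).1 haS
              have hwS' : w ∉ S := fun hw => hwS ((hmemV w).2 hw)
              have hain : a ∈ ({p, q} : Finset V) := by
                rw [← hpins_eq, hpe]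
                exact Finset.mem_insert_self a {w}
              have hwin : w ∈ ({p, q} : Finset V) := by
                rw [← hpins_eq, hpe]
                exact Finset.mem_insert_of_mem (Finset.mem_singleton_self w)
              have hap : a = p := by
                rcases Finset.mem_insert.1 hain with h' | h'
                · exact h'
                · exact absurd ((Finset.mem_singleton.1 h') ▸ haS') hqS
              have hwq : w = q := by
                rcases Finset.mem_insert.1 hwin with h' | h'
                · exact absurd (h' ▸ hpS) hwS'
                · exact Finset.mem_singleton.1 h'
              exact hyes ⟨hap, hwq⟩
            · exact zero_le
            · exact le_rfl
          calc ∑ a : V, ∑ w : V, tt e a w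
              ≤ ∑ a : V, ∑ w : V, (if a = p ∧ w = q then ENNReal.ofReal (ω e) else 0) :=
                Finset.sum_le_sum fun a _ => Finset.sum_le_sum fun w _ => pw a w
            _ = ENNReal.ofReal (ω e) := by
                simp [ite_and, Finset.sum_ite_eq, Finset.sum_ite_eq']
        · rw [Finset.sum_eq_zero]
          rintro a -
          apply Finset.sum_eq_zero
          rintro w -
          simp only [htt]
          rw [if_neg]
          rintro ⟨⟨haS, hwS⟩, -, hpe⟩
          refine hsp ⟨⟨a, ?_, (hmemV a).1 haS⟩, ⟨w, ?_, fun hw => hwS ((hmemV w).2 hw)⟩⟩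
          · rw [hpe]; exact Finset.mem_insert_self a {w}
          · rw [hpe]; exact Finset.mem_insert_of_mem (Finset.mem_singleton_self w)
      · rw [if_neg h2, Finset.sum_eq_zero]
        rintro a -
        apply Finset.sum_eq_zero
        rintro w -
        simp only [htt]
        exact if_neg fun hcond => h2 hcond.2.1
    calc ∑ a : V, ∑ w : V, g (Sum.inl a) (Sum.inl w)
        = ∑ a : V, ∑ w : V, ∑ e : E, tt e a w :=
          Finset.sum_congr rfl fun a _ => Finset.sum_congr rfl fun w _ => point a w
      _ = ∑ a : V, ∑ e : E, ∑ w : V, tt e a w :=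
          Finset.sum_congr rfl fun a _ => Finset.sum_comm
      _ = ∑ e : E, ∑ a : V, ∑ w : V, tt e a w := Finset.sum_comm
      _ ≤ ∑ e : E, (if (pins e).card = 2 then H e else 0) :=
          Finset.sum_le_sum fun e _ => perE e
      _ = ∑ e ∈ Finset.univ.filter (fun e : E => (pins e).card = 2), H e :=
          (Finset.sum_filter _ _).symm
  -- big-net part
  have chunkD : (∑ b : {e : E // 3 ≤ (pins e).card} × Bool,
        ∑ b' : {e : E // 3 ≤ (pins e).card} × Bool, g (Sum.inr b) (Sum.inr b')) ≤
      ∑ e ∈ Finset.univ.filter (fun e : E => ¬(pins e).card = 2), H e := by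
    set D1 : {e : E // 3 ≤ (pins e).card} → ℝ≥0∞ := fun e1 =>
      if (∃ p ∈ pins e1.1, p ∈ S) ∧ (∃ p ∈ pins e1.1, p ∉ S)
      then ENNReal.ofReal (ω e1.1) else 0 with hD1
    have perB : ∀ e1 : {e : E // 3 ≤ (pins e).card},
        (∑ b' : {e : E // 3 ≤ (pins e).card} × Bool,
          g (Sum.inr (e1, false)) (Sum.inr b')) ≤ D1 e1 := by
      intro e1
      have pw : ∀ b' : {e : E // 3 ≤ (pins e).card} × Bool,
          g (Sum.inr (e1, false)) (Sum.inr b') ≤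
            if b' = (e1, true) then D1 e1 else 0 := by
        rintro ⟨e2, _ | _⟩
        · simp [hg, hc, liuWongCap]
        · by_cases he : e1 = e2
          · subst he
            rw [if_pos rfl]
            simp only [hg, hD1]
            split_ifs with h hs
            · simp only [hc, liuWongCap, if_pos rfl]  -- may need adjusting
              exact le_rfl
            · exfalso
              rcases h with ⟨h1, h2⟩
              have hx := (hmemF e1).1 h1
              have hy : ¬∀ p ∈ pins e1.1, p ∈ S := fun hall => h2 ((hmemT e1).2 hall)
              push_neg at hy
              exact hs ⟨hx, hy⟩
            · exact zero_le
            · exact le_rfl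
          · rw [if_neg (by simpa using Ne.symm he)]
            simp only [hg]
            split_ifs with h
            · simp only [hc, liuWongCap]
              rw [if_neg (by simpa using he)]
            · rfl
      calc (∑ b' : {e : E // 3 ≤ (pins e).card} × Bool,
            g (Sum.inr (e1, false)) (Sum.inr b'))
          ≤ ∑ b' : {e : E // 3 ≤ (pins e).card} × Bool,
              (if b' = (e1, true) then D1 e1 else 0) :=
            Finset.sum_le_sum fun b' _ => pw b'
        _ = D1 e1 := by rw [Finset.sum_ite_eq' Finset.univ ((e1, true) :
              {e : E // 3 ≤ (pins e).card} × Bool) (fun _ => D1 e1), if_pos (Finset.mem_univ _)]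
    have hTrue : ∀ e1 : {e : E // 3 ≤ (pins e).card},
        (∑ b' : {e : E // 3 ≤ (pins e).card} × Bool,
          g (Sum.inr (e1, true)) (Sum.inr b')) = 0 := by
      intro e1
      apply Finset.sum_eq_zero
      rintro ⟨e2, _ | _⟩ - <;> simp [hg, hc, liuWongCap]
    calc (∑ b : {e : E // 3 ≤ (pins e).card} × Bool,
          ∑ b' : {e : E // 3 ≤ (pins e).card} × Bool, g (Sum.inr b) (Sum.inr b'))
        = ∑ e1 : {e : E // 3 ≤ (pins e).card},
            ((∑ b' : {e : E // 3 ≤ (pins e).card} × Bool,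
              g (Sum.inr (e1, true)) (Sum.inr b')) +
             (∑ b' : {e : E // 3 ≤ (pins e).card} × Bool,
              g (Sum.inr (e1, false)) (Sum.inr b'))) := by
          rw [Fintype.sum_prod_type]
          exact Finset.sum_congr rfl fun e1 _ =>
            Fintype.sum_bool (f := fun y => ∑ b', g (Sum.inr (e1, y)) (Sum.inr b'))
      _ ≤ ∑ e1 : {e : E // 3 ≤ (pins e).card}, D1 e1 := by
          apply Finset.sum_le_sum
          intro e1 _
          rw [hTrue e1, zero_add]
          exact perB e1
      _ = ∑ e ∈ Finset.univ.filter (fun e : E => ¬(pins e).card = 2), H e := by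
          rw [hfe, Finset.sum_subtype (p := fun e : E => 3 ≤ (pins e).card) _
            (fun e => by simp) H]
  calc cutCap c 𝒮 = (∑ a : V, F (Sum.inl a)) + ∑ b, F (Sum.inr b) := hcut
    _ = (∑ a : V, ∑ w : V, g (Sum.inl a) (Sum.inl w)) +
        ∑ b : {e : E // 3 ≤ (pins e).card} × Bool,
          ∑ b' : {e : E // 3 ≤ (pins e).card} × Bool, g (Sum.inr b) (Sum.inr b') := by
        rw [Finset.sum_congr rfl fun a _ => hBzero a,
          Finset.sum_congr rfl fun b _ => hCzero b]
    _ ≤ (∑ e ∈ Finset.univ.filter (fun e : E => (pins e).card = 2), H e) +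
        ∑ e ∈ Finset.univ.filter (fun e : E => ¬(pins e).card = 2), H e :=
        add_le_add chunkA chunkD
    _ = ∑ e : E, H e := Finset.sum_filter_add_sum_filter_not _ _ _

lemma sInf_eq_sInf_of_forall {A C : Set ℝ≥0∞}
    (h1 : ∀ x ∈ A, ∃ y ∈ C, y ≤ x) (h2 : ∀ y ∈ C, ∃ x ∈ A, x ≤ y) : sInf A = sInf C := by
  refine le_antisymm (le_sInf fun y hy => ?_) (le_sInf fun x hx => ?_)
  · obtain ⟨x, hx, hxy⟩ := h2 y hy
    exact (sInf_le hx).trans hxy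
  · obtain ⟨y, hy, hyx⟩ := h1 x hx
    exact (sInf_le hy).trans hyx

end Aux

/-- For a hypergraph in which every net has at least two pins, the
minimum `(s,t)`-cut capacities of the Liu–Wong network and of the Lawler network agree,
and both equal the minimum cut weight over all bipartitions `(S, V ∖ S)` of the
hypergraph with `s ∈ S` and `t ∉ S`. -/
theorem liu_wong_min_cut_eq_lawler_min_cut
    {V E : Type} [Fintype V] [Fintype E] [DecidableEq V] [DecidableEq E]
    (pins : E → Finset V) (ω : E → ℝ) (hω : ∀ e, 0 < ω e)
    (hpins : ∀ e, 2 ≤ (pins e).card)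
    (s t : V) (hst : s ≠ t) :
    sInf {x : ℝ≥0∞ | ∃ 𝒮 : Set (V ⊕ {e : E // 3 ≤ (pins e).card} × Bool),
        Sum.inl s ∈ 𝒮 ∧ Sum.inl t ∉ 𝒮 ∧ cutCap (liuWongCap pins ω) 𝒮 = x} =
      sInf {x : ℝ≥0∞ | ∃ 𝒮 : Set (V ⊕ E × Bool),
        Sum.inl s ∈ 𝒮 ∧ Sum.inl t ∉ 𝒮 ∧ cutCap (lawlerCap pins ω) 𝒮 = x} ∧
    sInf {x : ℝ≥0∞ | ∃ 𝒮 : Set (V ⊕ E × Bool),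
        Sum.inl s ∈ 𝒮 ∧ Sum.inl t ∉ 𝒮 ∧ cutCap (lawlerCap pins ω) 𝒮 = x} =
      sInf {x : ℝ≥0∞ | ∃ S : Set V,
        s ∈ S ∧ t ∉ S ∧ ENNReal.ofReal (hypCutWeight pins ω S) = x} := by
  have hω' : ∀ e, 0 ≤ ω e := fun e => (hω e).le
  have hLawler : sInf {x : ℝ≥0∞ | ∃ 𝒮 : Set (V ⊕ E × Bool),
      Sum.inl s ∈ 𝒮 ∧ Sum.inl t ∉ 𝒮 ∧ cutCap (lawlerCap pins ω) 𝒮 = x} =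
      sInf {x : ℝ≥0∞ | ∃ S : Set V,
        s ∈ S ∧ t ∉ S ∧ ENNReal.ofReal (hypCutWeight pins ω S) = x} := by
    apply sInf_eq_sInf_of_forall
    · rintro x ⟨𝒮, hs, ht, rfl⟩
      exact ⟨_, ⟨{v | Sum.inl v ∈ 𝒮}, hs, ht, rfl⟩, lawler_lower pins ω hω' 𝒮⟩
    · rintro y ⟨S, hs, ht, rfl⟩
      exact ⟨_, ⟨lawlerCut pins S, hs, ht, rfl⟩, lawler_upper pins ω hω' S⟩
  have hLW : sInf {x : ℝ≥0∞ | ∃ 𝒮 : Set (V ⊕ {e : E // 3 ≤ (pins e).card} × Bool),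
      Sum.inl s ∈ 𝒮 ∧ Sum.inl t ∉ 𝒮 ∧ cutCap (liuWongCap pins ω) 𝒮 = x} =
      sInf {x : ℝ≥0∞ | ∃ S : Set V,
        s ∈ S ∧ t ∉ S ∧ ENNReal.ofReal (hypCutWeight pins ω S) = x} := by
    apply sInf_eq_sInf_of_forall
    · rintro x ⟨𝒮, hs, ht, rfl⟩
      exact ⟨_, ⟨{v | Sum.inl v ∈ 𝒮}, hs, ht, rfl⟩, lw_lower pins ω hω' hpins 𝒮⟩
    · rintro y ⟨S, hs, ht, rfl⟩
      exact ⟨_, ⟨lwCut pins S, hs, ht, rfl⟩, lw_upper pins ω hω' hpins S⟩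
  exact ⟨hLW.trans hLawler.symm, hLawler⟩
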